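/- Let F be a field, f ∈ F[z] monic irreducible of degree d, e ≥ 1, and let C = C_{f^e} be the de×de companion matrix of f^e. Then f(C) is similar over F to the nilpotent block matrix N with e×e blocks of size d: N has identity blocks I_d on the first superdiagonal (block positions (i,i+1)) and zero blocks elsewhere. In particular f(C)^e = 0 and the minimal polynomial of f(C) is x^e. -/

import Mathlib

open Polynomial Matrix

/-- The companion matrix of a monic polynomial `g`, of size `m`. -/
def companionMat {F : Type*} [Field F] (m : ℕ) (g : Polynomial F) :
    Matrix (Fin m) (Fin m) F :=
  Matrix.of fun i j =>
    if j.val = m - 1 then -g.coeff i.val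
    else if i.val = j.val + 1 then 1 else 0

/-- The block-nilpotent matrix `N` of size `de×de` with `d×d` identity blocks
on the first block superdiagonal: entry `(a,b)` is `1` iff `b = a + d`. -/
def blockNilpotent (F : Type*) [Field F] (d e : ℕ) :
    Matrix (Fin (d * e)) (Fin (d * e)) F :=
  Matrix.of fun a b => if b.val = a.val + d then 1 else 0

noncomputable def arBasis {F : Type*} [Field F] {g : Polynomial F} (hg : g.Monic) {m : ℕ}
    (hm : g.natDegree = m) : Module.Basis (Fin m) F (AdjoinRoot g) :=
  (AdjoinRoot.powerBasisAux' hg).reindex (finCongr hm)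

lemma arBasis_apply {F : Type*} [Field F] {g : Polynomial F} (hg : g.Monic) {m : ℕ}
    (hm : g.natDegree = m) (b : Fin m) :
    arBasis hg hm b = AdjoinRoot.root g ^ (b : ℕ) := by
  rw [arBasis, Module.Basis.reindex_apply]
  have h := (AdjoinRoot.powerBasis' hg).basis_eq_pow ((finCongr hm).symm b)
  simp [AdjoinRoot.powerBasis'] at h
  exact h

lemma arBasis_repr {F : Type*} [Field F] {g : Polynomial F} (hg : g.Monic) {m : ℕ}
    (hm : g.natDegree = m) (x : AdjoinRoot g) (a : Fin m) :
    (arBasis hg hm).repr x a = (AdjoinRoot.modByMonicHom hg x).coeff (a : ℕ) := by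
  rw [arBasis, Module.Basis.repr_reindex_apply, AdjoinRoot.powerBasisAux'_repr_apply_to_fun]
  simp

lemma arBasis_sum_coeff {F : Type*} [Field F] {g : Polynomial F} (hg : g.Monic) {m : ℕ}
    (hm : g.natDegree = m) (p : Polynomial F) (hp : p.natDegree < m) :
    ∑ b : Fin m, p.coeff (b : ℕ) • arBasis hg hm b = AdjoinRoot.mk g p := by
  rw [← AdjoinRoot.aeval_eq, aeval_eq_sum_range' hp, ← Fin.sum_univ_eq_sum_range]
  exact Finset.sum_congr rfl fun b _ => by rw [arBasis_apply]

lemma Xpow_modByMonic {F : Type*} [Field F] (g : Polynomial F) (hg : g.Monic) (m : ℕ)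
    (hm : g.natDegree = m) (hm0 : 0 < m) : X ^ m %ₘ g = X ^ m - g := by
  have h1 : degree (X ^ m - g) < degree (X ^ m : F[X]) := by
    refine degree_sub_lt ?_ (pow_ne_zero m X_ne_zero) ?_
    · rw [degree_X_pow, degree_eq_natDegree hg.ne_zero, hm]
    · simp [leadingCoeff_X_pow, hg.leadingCoeff]
  rw [degree_X_pow] at h1
  have hdlt : (X ^ m - g).degree < g.degree := by
    rwa [degree_eq_natDegree hg.ne_zero, hm]
  have h2 : (X ^ m - g) %ₘ g = X ^ m - g := (modByMonic_eq_self_iff hg).2 hdlt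
  have h3 : g %ₘ g = 0 := by
    simpa using mul_self_modByMonic (p := (1 : Polynomial F)) hg
  calc X ^ m %ₘ g = (X ^ m - g + g) %ₘ g := by ring_nf
    _ = (X ^ m - g) %ₘ g + g %ₘ g := add_modByMonic _ _
    _ = X ^ m - g := by rw [h2, h3, add_zero]

lemma companion_eq_toMatrix {F : Type*} [Field F] {g : Polynomial F} (hg : g.Monic) {m : ℕ}
    (hm : g.natDegree = m) (hm0 : 0 < m) :
    companionMat m g =
      LinearMap.toMatrixAlgEquiv (arBasis hg hm)
        (Algebra.lmul F (AdjoinRoot g) (AdjoinRoot.root g)) := by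
  ext a b
  rw [LinearMap.toMatrixAlgEquiv_apply, arBasis_repr, arBasis_apply]
  have hx : (Algebra.lmul F (AdjoinRoot g)) (AdjoinRoot.root g) (AdjoinRoot.root g ^ (b : ℕ))
      = AdjoinRoot.mk g (X ^ ((b : ℕ) + 1)) := by
    have h0 : ((Algebra.lmul F (AdjoinRoot g)) (AdjoinRoot.root g)) (AdjoinRoot.root g ^ (b : ℕ))
        = AdjoinRoot.root g * AdjoinRoot.root g ^ (b : ℕ) := rfl
    rw [h0, ← pow_succ', map_pow, AdjoinRoot.mk_X]
  rw [hx, AdjoinRoot.modByMonicHom_mk]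
  by_cases hb : (b : ℕ) = m - 1
  · have hb1 : (b : ℕ) + 1 = m := by omega
    rw [hb1, Xpow_modByMonic g hg m hm hm0]
    have ha : (a : ℕ) ≠ m := by have := a.isLt; omega
    simp [companionMat, hb, coeff_X_pow, ha]
  · have hlt : (b : ℕ) + 1 < m := by have := b.isLt; omega
    have : X ^ ((b : ℕ) + 1) %ₘ g = X ^ ((b : ℕ) + 1) := by
      refine (modByMonic_eq_self_iff hg).2 ?_
      rw [degree_X_pow, degree_eq_natDegree hg.ne_zero, hm]
      exact_mod_cast hlt
    rw [this]
    simp [companionMat, hb, coeff_X_pow, eq_comm]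

lemma mix_mod {d : ℕ} (i k : ℕ) (hi : i < d) : (i + d * k) % d = i := by
  rw [Nat.add_mul_mod_self_left, Nat.mod_eq_of_lt hi]

lemma mix_div {d : ℕ} (hd : 0 < d) (i k : ℕ) (hi : i < d) : (i + d * k) / d = k := by
  rw [Nat.add_mul_div_left _ _ hd, Nat.div_eq_of_lt hi, zero_add]

lemma sigma_lt {d e : ℕ} (hd : 0 < d) (a : Fin (d * e)) :
    (a : ℕ) % d + d * (e - 1 - (a : ℕ) / d) < d * e := by
  have h1 : (a : ℕ) % d < d := Nat.mod_lt _ hd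
  have h2 : (a : ℕ) / d < e := Nat.div_lt_of_lt_mul a.isLt
  have h5 : e - (a : ℕ) / d = (e - 1 - (a : ℕ) / d) + 1 := by omega
  calc (a : ℕ) % d + d * (e - 1 - (a : ℕ) / d) < d + d * (e - 1 - (a : ℕ) / d) :=
        Nat.add_lt_add_right h1 _
    _ = d * (e - (a : ℕ) / d) := by rw [h5, Nat.mul_succ, Nat.add_comm]
    _ ≤ d * e := Nat.mul_le_mul_left d (Nat.sub_le _ _)

lemma sigma_invol {d e : ℕ} (hd : 0 < d) (a : Fin (d * e)) :
    ((a : ℕ) % d + d * (e - 1 - (a : ℕ) / d)) % d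
      + d * (e - 1 - ((a : ℕ) % d + d * (e - 1 - (a : ℕ) / d)) / d) = (a : ℕ) := by
  have h1 : (a : ℕ) % d < d := Nat.mod_lt _ hd
  have h2 : (a : ℕ) / d < e := Nat.div_lt_of_lt_mul a.isLt
  rw [mix_mod _ _ h1, mix_div hd _ _ h1]
  have h3 : e - 1 - (e - 1 - (a : ℕ) / d) = (a : ℕ) / d := by
    generalize (a : ℕ) / d = j at h2 ⊢; omega
  rw [h3, Nat.mod_add_div]

/-- The block-reversal permutation of `Fin (d*e)`. -/
noncomputable def revPerm (d e : ℕ) (hd : 0 < d) : Equiv.Perm (Fin (d * e)) :=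
  Function.Involutive.toPerm
    (fun a => ⟨(a : ℕ) % d + d * (e - 1 - (a : ℕ) / d), sigma_lt hd a⟩)
    (fun a => Fin.ext (sigma_invol hd a))

lemma revPerm_val {d e : ℕ} (hd : 0 < d) (a : Fin (d * e)) :
    ((revPerm d e hd a : Fin (d * e)) : ℕ) = (a : ℕ) % d + d * (e - 1 - (a : ℕ) / d) := rfl

lemma revPerm_mod {d e : ℕ} (hd : 0 < d) (a : Fin (d * e)) :
    ((revPerm d e hd a : Fin (d * e)) : ℕ) % d = (a : ℕ) % d :=
  mix_mod _ _ (Nat.mod_lt _ hd)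

lemma revPerm_div {d e : ℕ} (hd : 0 < d) (a : Fin (d * e)) :
    ((revPerm d e hd a : Fin (d * e)) : ℕ) / d = e - 1 - (a : ℕ) / d :=
  mix_div hd _ _ (Nat.mod_lt _ hd)

lemma sub_d_mod {d : ℕ} (hd : 0 < d) (a : ℕ) (h : d ≤ a) :
    (a - d) % d = a % d ∧ (a - d) / d = a / d - 1 := by
  have h1 : a % d < d := Nat.mod_lt _ hd
  have hj1 : 1 ≤ a / d := (Nat.one_le_div_iff hd).2 h
  have hjj : (a / d - 1) + 1 = a / d := by omega
  have h4 : d * (a / d - 1) + d = d * (a / d) := by rw [← Nat.mul_succ, Nat.succ_eq_add_one, hjj]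
  have hmd : a % d + d * (a / d) = a := Nat.mod_add_div _ _
  have hsplit : a - d = a % d + d * (a / d - 1) := by
    generalize d * (a / d - 1) = P1 at h4 ⊢
    generalize d * (a / d) = P2 at h4 hmd
    omega
  rw [hsplit, mix_mod _ _ h1, mix_div hd _ _ h1]
  exact ⟨rfl, rfl⟩

/-- The polynomial `X^(a % d) * f^(a / d)`. -/
noncomputable def qPoly {F : Type*} [Field F] (f : Polynomial F) (d : ℕ) (a : ℕ) : Polynomial F :=
  X ^ (a % d) * f ^ (a / d)

lemma qPoly_monic {F : Type*} [Field F] {f : Polynomial F} (hmonic : f.Monic) (d a : ℕ) :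
    (qPoly f d a).Monic :=
  (monic_X_pow _).mul (hmonic.pow _)

lemma qPoly_natDegree {F : Type*} [Field F] {f : Polynomial F} (hmonic : f.Monic) {d : ℕ}
    (hd : f.natDegree = d) (a : ℕ) : (qPoly f d a).natDegree = a := by
  rw [qPoly, (monic_X_pow _).natDegree_mul (hmonic.pow _), natDegree_X_pow, natDegree_pow, hd,
    Nat.mod_add_div']

/-- The matrix whose column `a` consists of the coefficients of `X^(a % d) * f^(a / d)`. -/
noncomputable def coeffMat {F : Type*} [Field F] (f : Polynomial F) (d e : ℕ) :
    Matrix (Fin (d * e)) (Fin (d * e)) F :=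
  Matrix.of fun b a : Fin (d * e) => (qPoly f d (a : ℕ)).coeff (b : ℕ)

lemma coeffMat_det {F : Type*} [Field F] {f : Polynomial F} (hmonic : f.Monic) {d : ℕ}
    (hd : f.natDegree = d) (e : ℕ) : (coeffMat f d e).det = 1 := by
  have htri : (coeffMat f d e).BlockTriangular id := by
    intro b a h
    have hlt : (qPoly f d (a : ℕ)).natDegree < (b : ℕ) := by
      rw [qPoly_natDegree hmonic hd]; exact h
    exact coeff_eq_zero_of_natDegree_lt hlt
  rw [Matrix.det_of_upperTriangular htri]
  refine Finset.prod_eq_one fun a _ => ?_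
  show (qPoly f d (a : ℕ)).coeff (a : ℕ) = 1
  have h2 := (qPoly_monic hmonic d (a : ℕ)).coeff_natDegree
  rwa [qPoly_natDegree hmonic hd] at h2

/-- `f(C_{f^e})` is similar over `F` to the block nilpotent matrix `N`;
in particular `f(C)^e = 0` and the minimal polynomial of `f(C)` is `X^e`. -/
theorem eval_companion_similar_blockNilpotent {F : Type*} [Field F]
    (f : Polynomial F) (hf : Irreducible f) (hmonic : f.Monic)
    (d e : ℕ) (hd : d = f.natDegree) (he : 1 ≤ e)
    (C : Matrix (Fin (d * e)) (Fin (d * e)) F)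
    (hC : C = companionMat (d * e) (f ^ e)) :
    (∃ P : Matrix (Fin (d * e)) (Fin (d * e)) F,
        IsUnit P ∧ P * (Polynomial.aeval C f) = blockNilpotent F d e * P) ∧
    (Polynomial.aeval C f) ^ e = 0 ∧
    minpoly F (Polynomial.aeval C f) = Polynomial.X ^ e := by
  classical
  subst hC
  have hd0 : 0 < d := hd ▸ hf.natDegree_pos
  have hde : 0 < d * e := Nat.mul_pos hd0 he
  set g : Polynomial F := f ^ e with hgdef
  have hg : g.Monic := hmonic.pow e
  have hm : g.natDegree = d * e := by
    rw [hgdef, natDegree_pow, ← hd, mul_comm]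
  set b1 : Module.Basis (Fin (d * e)) F (AdjoinRoot g) := arBasis hg hm with hb1def
  set Φ : AdjoinRoot g →ₐ[F] Matrix (Fin (d * e)) (Fin (d * e)) F :=
    (LinearMap.toMatrixAlgEquiv b1).toAlgHom.comp (Algebra.lmul F (AdjoinRoot g)) with hΦdef
  have hΦroot : Φ (AdjoinRoot.root g) = companionMat (d * e) g :=
    (companion_eq_toMatrix hg hm hde).symm
  set y : AdjoinRoot g := AdjoinRoot.mk g f with hy
  have hyaeval : aeval (AdjoinRoot.root g) f = y := AdjoinRoot.aeval_eq f
  have hkey : aeval (companionMat (d * e) g) f = Φ y := by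
    rw [← hΦroot, aeval_algHom_apply, hyaeval]
  have hye : y ^ e = 0 := by rw [hy, ← map_pow, ← hgdef, AdjoinRoot.mk_self]
  have hnil : (aeval (companionMat (d * e) g) f) ^ e = 0 := by
    rw [hkey, ← map_pow, hye, map_zero]
  have hΦinj : Function.Injective Φ := fun u v huv =>
    Algebra.lmul_injective ((LinearMap.toMatrixAlgEquiv b1).injective huv)
  haveI : Module.Finite F (AdjoinRoot g) := Module.Finite.of_basis b1
  have hint : IsIntegral F y := IsIntegral.of_finite F y
  have hminy : minpoly F y = X ^ e := by
    have hdvd : minpoly F y ∣ X ^ e := minpoly.dvd F y (by rw [map_pow, aeval_X, hye])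
    obtain ⟨k, hk, hassoc⟩ := (dvd_prime_pow prime_X e).1 hdvd
    have hmp : minpoly F y = X ^ k :=
      eq_of_monic_of_associated (minpoly.monic hint) (monic_X_pow k) hassoc
    have hyk : y ^ k = 0 := by
      have h5 := minpoly.aeval F y
      rw [hmp, map_pow, aeval_X] at h5; exact h5
    have hdvd2 : g ∣ f ^ k := by
      rw [← AdjoinRoot.mk_eq_zero, map_pow, ← hy]; exact hyk
    have h2 := Polynomial.natDegree_le_of_dvd hdvd2 (pow_ne_zero k hmonic.ne_zero)
    rw [hgdef, natDegree_pow, natDegree_pow] at h2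
    have hek : e ≤ k := by
      have hdpos : 0 < f.natDegree := hd ▸ hd0
      generalize f.natDegree = D at h2 hdpos
      exact Nat.le_of_mul_le_mul_right h2 hdpos
    rw [hmp, le_antisymm hk hek]
  have hminC : minpoly F (aeval (companionMat (d * e) g) f) = X ^ e := by
    rw [hkey, minpoly.algHom_eq Φ hΦinj y, hminy]
  -- the similarity
  set T : Matrix (Fin (d * e)) (Fin (d * e)) F := coeffMat f d e with hTdef
  have hTdet : IsUnit T.det := by
    rw [hTdef, coeffMat_det hmonic hd.symm]; exact isUnit_one
  set Tr : Matrix (Fin (d * e)) (Fin (d * e)) F :=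
    T.submatrix id ⇑(revPerm d e hd0) with hTrdef
  have hTrmul : Tr * (T⁻¹.submatrix ⇑(revPerm d e hd0) id) = 1 := by
    rw [hTrdef, Matrix.submatrix_mul_equiv, Matrix.mul_nonsing_inv _ hTdet,
      Matrix.submatrix_id_id]
  have hTrUnit : IsUnit Tr := ⟨⟨Tr, _, hTrmul, mul_eq_one_comm.mp hTrmul⟩, rfl⟩
  have hTrdet : IsUnit Tr.det := (Matrix.isUnit_iff_isUnit_det Tr).mp hTrUnit
  have hTrb : ∀ a : Fin (d * e), Matrix.toLinAlgEquiv b1 Tr (b1 a)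
      = AdjoinRoot.mk g (qPoly f d ((revPerm d e hd0 a : Fin (d * e)) : ℕ)) := by
    intro a
    rw [Matrix.toLinAlgEquiv_self]
    have hdeg : (qPoly f d ((revPerm d e hd0 a : Fin (d * e)) : ℕ)).natDegree < d * e := by
      rw [qPoly_natDegree hmonic hd.symm]; exact (revPerm d e hd0 a).isLt
    exact arBasis_sum_coeff hg hm _ hdeg
  have hmkq : ∀ a : Fin (d * e), AdjoinRoot.mk g (qPoly f d ((revPerm d e hd0 a : Fin (d * e)) : ℕ))
      = AdjoinRoot.root g ^ ((a : ℕ) % d) * y ^ (e - 1 - (a : ℕ) / d) := by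
    intro a
    rw [qPoly, _root_.map_mul, map_pow, map_pow, AdjoinRoot.mk_X, revPerm_mod hd0, revPerm_div hd0, ← hy]
  have hNb : ∀ a : Fin (d * e), Matrix.toLinAlgEquiv b1 (blockNilpotent F d e) (b1 a)
      = if h : d ≤ (a : ℕ) then b1 ⟨(a : ℕ) - d, lt_of_le_of_lt (Nat.sub_le _ _) a.isLt⟩
        else 0 := by
    intro a
    rw [Matrix.toLinAlgEquiv_self]
    by_cases h : d ≤ (a : ℕ)
    · rw [dif_pos h]
      rw [Finset.sum_eq_single (⟨(a : ℕ) - d, lt_of_le_of_lt (Nat.sub_le _ _) a.isLt⟩ :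
        Fin (d * e))]
      · have h1 : blockNilpotent F d e
            ⟨(a : ℕ) - d, lt_of_le_of_lt (Nat.sub_le _ _) a.isLt⟩ a = 1 := by
          show (if (a : ℕ) = ((a : ℕ) - d) + d then (1 : F) else 0) = 1
          rw [if_pos (by omega)]
        rw [h1, one_smul]
      · intro b _ hb
        have h0 : blockNilpotent F d e b a = 0 := by
          show (if (a : ℕ) = (b : ℕ) + d then (1 : F) else 0) = 0
          rw [if_neg]
          intro hab
          exact hb (Fin.ext (show (b : ℕ) = (a : ℕ) - d by omega))
        rw [h0, zero_smul]
      · exact fun hmem => absurd (Finset.mem_univ _) hmem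
    · rw [dif_neg h]
      refine Finset.sum_eq_zero fun b _ => ?_
      have h0 : blockNilpotent F d e b a = 0 := by
        show (if (a : ℕ) = (b : ℕ) + d then (1 : F) else 0) = 0
        rw [if_neg (by omega)]
      rw [h0, zero_smul]
  have hmain : (aeval (companionMat (d * e) g) f) * Tr = Tr * blockNilpotent F d e := by
    apply (Matrix.toLinAlgEquiv b1).injective
    rw [_root_.map_mul, _root_.map_mul]
    have hAf : Matrix.toLinAlgEquiv b1 (aeval (companionMat (d * e) g) f)
        = Algebra.lmul F (AdjoinRoot g) y := by
      rw [hkey, hΦdef]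
      exact Matrix.toLinAlgEquiv_toMatrixAlgEquiv b1 _
    rw [hAf]
    refine b1.ext fun a => ?_
    rw [Module.End.mul_apply, Module.End.mul_apply, hTrb a, hNb a, hmkq a]
    have hlmul : ∀ z : AdjoinRoot g, Algebra.lmul F (AdjoinRoot g) y z = y * z := fun _ => rfl
    rw [hlmul]
    by_cases h : d ≤ (a : ℕ)
    · rw [dif_pos h, hTrb, hmkq]
      have hsub := sub_d_mod hd0 (a : ℕ) h
      show y * (AdjoinRoot.root g ^ ((a : ℕ) % d) * y ^ (e - 1 - (a : ℕ) / d))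
          = AdjoinRoot.root g ^ (((a : ℕ) - d) % d) * y ^ (e - 1 - ((a : ℕ) - d) / d)
      rw [hsub.1, hsub.2]
      have hj : (a : ℕ) / d < e := Nat.div_lt_of_lt_mul a.isLt
      have hj1 : 1 ≤ (a : ℕ) / d := (Nat.one_le_div_iff hd0).2 h
      have hexp : e - 1 - ((a : ℕ) / d - 1) = (e - 1 - (a : ℕ) / d) + 1 := by
        generalize (a : ℕ) / d = j at hj hj1 ⊢; omega
      rw [hexp, pow_succ]; ring
    · rw [dif_neg h, map_zero]
      have hj0 : (a : ℕ) / d = 0 := Nat.div_eq_of_lt (not_le.mp h)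
      rw [hj0, Nat.sub_zero]
      have he1 : e - 1 + 1 = e := by omega
      rw [show y * (AdjoinRoot.root g ^ ((a : ℕ) % d) * y ^ (e - 1))
          = AdjoinRoot.root g ^ ((a : ℕ) % d) * y ^ (e - 1 + 1) by rw [pow_succ]; ring,
        he1, hye, mul_zero]
  have hP1 : Tr⁻¹ * Tr = 1 := Matrix.nonsing_inv_mul Tr hTrdet
  have hP2 : Tr * Tr⁻¹ = 1 := Matrix.mul_nonsing_inv Tr hTrdet
  have heq : Tr⁻¹ * aeval (companionMat (d * e) g) f = blockNilpotent F d e * Tr⁻¹ := by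
    have h6 := congrArg (fun M => Tr⁻¹ * M * Tr⁻¹) hmain
    simp only [mul_assoc] at h6
    rw [hP2, mul_one] at h6
    rw [← mul_assoc, hP1, one_mul] at h6
    exact h6
  exact ⟨⟨Tr⁻¹, ⟨⟨Tr⁻¹, Tr, hP1, hP2⟩, rfl⟩, heq⟩, hnil, hminC⟩
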